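/- arXiv:2106.08971 — 5 statements merged into one kernel-verified Lean document; each statement's English description precedes it below -/
import Mathlib

section
/- Let (α, 𝒜, μ) be a probability space and let u_1, …, u_N : α → [0,∞) be measurable umbrella bias functions with weights w_i := ∫ u_i dμ ∈ (0,∞). Let μ_i be the i-th umbrella-biased probability measure, i.e. μ with density u_i/w_i, and assume Σ_{k=1}^N u_k(q)/w_k > 0 for μ-almost every q. Define the overlap matrix M by M_{ij} := ∫ (u_j(q)/w_i) / (Σ_{k=1}^N u_k(q)/w_k) dμ_i(q), assuming each such integral is finite. Then for every j ∈ {1,…,N}, Σ_{i=1}^N w_i · M_{ij} = w_j; that is, the weight vector w = (w_1,…,w_N) satisfies w M = w (w is a left fixed vector of the overlap matrix M). -/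
open MeasureTheory

/-- **Theorem 1 (fixed-point equation of umbrella sampling).**
On a probability space `(α, μ)` with measurable umbrella bias functions
`u i : α → [0,∞)`, weights `w i = ∫ u i ∂μ ∈ (0,∞)`, biased probability
measures `μb i = μ.withDensity (u i / w i)`, and coverage
`∑ k, u k q / w k > 0` for `μ`-a.e. `q`, the overlap matrix
`M i j = ∫ (u j q / w i) / (∑ k, u k q / w k) ∂(μb i)` (each integral finite)
satisfies `∑ i, w i * M i j = w j` for all `j`, i.e. `w M = w`. -/
theorem umbrella_weight_fixed_point
    {α : Type*} [MeasurableSpace α] (μ : Measure α) [IsProbabilityMeasure μ]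
    (N : ℕ) (u : Fin N → α → ℝ)
    (hu_meas : ∀ i, Measurable (u i))
    (hu_nonneg : ∀ i q, 0 ≤ u i q)
    (hu_int : ∀ i, Integrable (u i) μ)
    (w : Fin N → ℝ) (hw : ∀ i, w i = ∫ q, u i q ∂μ)
    (hw_pos : ∀ i, 0 < w i)
    (μb : Fin N → Measure α)
    (hμb : ∀ i, μb i = μ.withDensity (fun q => ENNReal.ofReal (u i q / w i)))
    (hcover : ∀ᵐ q ∂μ, 0 < ∑ k, u k q / w k)
    (M : Fin N → Fin N → ℝ)
    (hM : ∀ i j, M i j = ∫ q, (u j q / w i) / (∑ k, u k q / w k) ∂(μb i))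
    (hM_int : ∀ i j,
      Integrable (fun q => (u j q / w i) / (∑ k, u k q / w k)) (μb i)) :
    ∀ j, ∑ i, w i * M i j = w j := by
  intro j
  set S : α → ℝ := fun q => ∑ k, u k q / w k with hS
  -- density as an `ℝ≥0`-valued function
  have hdens : ∀ i, (fun q => ENNReal.ofReal (u i q / w i))
      = fun q => ((Real.toNNReal (u i q / w i) : NNReal) : ENNReal) := by
    intro i; rfl
  have hd_meas : ∀ i, Measurable (fun q => Real.toNNReal (u i q / w i)) := by
    intro i
    exact ((hu_meas i).div_const (w i)).real_toNNReal
  have hd_nonneg : ∀ i q, 0 ≤ u i q / w i := fun i q =>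
    div_nonneg (hu_nonneg i q) (hw_pos i).le
  have hid : ∀ i q, w i * ((u i q / w i) * (u j q / w i / S q))
      = u i q / w i * (u j q / S q) := by
    intro i q
    have hwi : w i ≠ 0 := (hw_pos i).ne'
    have hx : w i * (u j q / w i) = u j q := by
      rw [mul_div_assoc']
      exact mul_div_cancel_left₀ _ hwi
    calc w i * (u i q / w i * (u j q / w i / S q))
        = u i q / w i * (w i * (u j q / w i) / S q) := by ring
      _ = u i q / w i * (u j q / S q) := by rw [hx]
  -- the key per-term identity
  have hkey : ∀ i, w i * M i j
      = ∫ q, (u i q / w i) * (u j q / S q) ∂μ := by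
    intro i
    rw [hM, hμb, hdens i,
      integral_withDensity_eq_integral_smul (hd_meas i)
        (fun q => (u j q / w i) / S q)]
    rw [← integral_const_mul]
    congr 1
    funext q
    rw [NNReal.smul_def, Real.coe_toNNReal _ (hd_nonneg i q)]
    exact hid i q
  -- integrability of each term
  have hintF : ∀ i, Integrable (fun q => (u i q / w i) * (u j q / S q)) μ := by
    intro i
    have h := hM_int i j
    rw [hμb, hdens i,
      integrable_withDensity_iff_integrable_smul (hd_meas i)] at h
    have h2 := h.const_mul (w i)
    apply h2.congr
    filter_upwards with q
    rw [NNReal.smul_def, Real.coe_toNNReal _ (hd_nonneg i q)]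
    exact hid i q
  calc ∑ i, w i * M i j
      = ∫ q, ∑ i, (u i q / w i) * (u j q / S q) ∂μ := by
        rw [integral_finset_sum _ (fun i _ => hintF i)]
        exact Finset.sum_congr rfl fun i _ => hkey i
    _ = ∫ q, u j q ∂μ := by
        apply integral_congr_ae
        filter_upwards [hcover] with q hq
        rw [← Finset.sum_mul]
        show S q * (u j q / S q) = u j q
        have hSne : S q ≠ 0 := hq.ne'
        field_simp
    _ = w j := (hw j).symm
end

section
/- Let (α, 𝒜, μ) be a probability space and let u_1, …, u_N : α → [0,∞) be measurable umbrella bias functions with weights w_i := ∫ u_i dμ ∈ (0,∞), biased probability measures μ_i := w_i⁻¹ · (u_i · μ), and assume Σ_{k=1}^N u_k(q)/w_k > 0 for μ-almost every q. Then for every μ-integrable function G : α → ℝ, the target expectation decomposes as a sum of biased expectations: ∫ G dμ = Σ_{i=1}^N ∫ G(q) / (Σ_{j=1}^N u_j(q)/w_j) dμ_i(q). -/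
open MeasureTheory

/-- **Umbrella sampling reconstruction of expectations (Eq. 17).**
For every `μ`-integrable `G : α → ℝ`,
`∫ G ∂μ = ∑ i, ∫ G q / (∑ j, u j q / w j) ∂(μb i)`. -/
theorem umbrella_expectation_decomposition
    {α : Type*} [MeasurableSpace α] (μ : Measure α) [IsProbabilityMeasure μ]
    (N : ℕ) (u : Fin N → α → ℝ)
    (hu_meas : ∀ i, Measurable (u i))
    (hu_nonneg : ∀ i q, 0 ≤ u i q)
    (hu_int : ∀ i, Integrable (u i) μ)
    (w : Fin N → ℝ) (hw : ∀ i, w i = ∫ q, u i q ∂μ)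
    (hw_pos : ∀ i, 0 < w i)
    (μb : Fin N → Measure α)
    (hμb : ∀ i, μb i = μ.withDensity (fun q => ENNReal.ofReal (u i q / w i)))
    (hcover : ∀ᵐ q ∂μ, 0 < ∑ k, u k q / w k)
    (G : α → ℝ) (hG : Integrable G μ) :
    ∫ q, G q ∂μ = ∑ i, ∫ q, G q / (∑ j, u j q / w j) ∂(μb i) := by
  set S : α → ℝ := fun q => ∑ j, u j q / w j with hS
  have hS_meas : Measurable S := by
    apply Finset.measurable_sum
    intro j _
    exact (hu_meas j).div_const _
  -- each term equals an integral against μ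
  have hterm : ∀ i, ∫ q, G q / S q ∂(μb i)
      = ∫ q, (u i q / w i) * (G q / S q) ∂μ := by
    intro i
    rw [hμb i]
    have hmeas : Measurable fun q => (u i q / w i).toNNReal :=
      ((hu_meas i).div_const _).real_toNNReal
    calc ∫ q, G q / S q ∂(μ.withDensity fun q => ENNReal.ofReal (u i q / w i))
        = ∫ q, G q / S q ∂(μ.withDensity fun q => ((u i q / w i).toNNReal : ENNReal)) := rfl
      _ = ∫ q, (u i q / w i).toNNReal • (G q / S q) ∂μ :=
          integral_withDensity_eq_integral_smul hmeas _
      _ = ∫ q, (u i q / w i) * (G q / S q) ∂μ := by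
          refine integral_congr_ae (Filter.Eventually.of_forall fun q => ?_)
          have h0 : 0 ≤ u i q / w i := div_nonneg (hu_nonneg i q) (hw_pos i).le
          simp [NNReal.smul_def, Real.coe_toNNReal _ h0]
  -- integrability of each term
  have hint : ∀ i, Integrable (fun q => (u i q / w i) * (G q / S q)) μ := by
    intro i
    refine hG.mono ?_ ?_
    · exact ((((hu_meas i).div_const _).aestronglyMeasurable)).mul
        (hG.aemeasurable.div hS_meas.aemeasurable).aestronglyMeasurable
    · filter_upwards [hcover] with q hq
      have h0 : 0 ≤ u i q / w i := div_nonneg (hu_nonneg i q) (hw_pos i).le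
      have hle : u i q / w i ≤ S q :=
        Finset.single_le_sum (f := fun j => u j q / w j)
          (fun j _ => div_nonneg (hu_nonneg j q) (hw_pos j).le) (Finset.mem_univ i)
      rw [Real.norm_eq_abs, Real.norm_eq_abs, abs_mul, abs_of_nonneg h0, abs_div]
      rw [abs_of_pos hq]
      calc u i q / w i * (|G q| / S q) ≤ S q * (|G q| / S q) := by
            apply mul_le_mul_of_nonneg_right hle
            positivity
        _ = |G q| := by
              have hSq : S q ≠ 0 := hq.ne'
              field_simp
  rw [show (∑ i, ∫ q, G q / (∑ j, u j q / w j) ∂(μb i)) = ∑ i, ∫ q, (u i q / w i) * (G q / S q) ∂μ from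
    Finset.sum_congr rfl fun i _ => hterm i]
  rw [← integral_finset_sum _ fun i _ => hint i]
  refine integral_congr_ae ?_
  filter_upwards [hcover] with q hq
  rw [← Finset.sum_mul]
  field_simp
  exact (mul_div_cancel_right₀ (G q) (hq.ne' : S q ≠ 0)).symm
end

section
/- Let α ∈ ℝ, let μ_A, μ_Z ∈ ℝ and σ_A², σ_Z² > 0. Set σ_B² := α²σ_A² + σ_Z², μ_B := αμ_A + μ_Z, β := ασ_A² / σ_B², μ_{Z_A} := (1 − αβ)μ_A − βμ_Z, and σ_{Z_A}² := (1 − αβ)²σ_A² + β²σ_Z². If B' and Z_A' are independent real random variables with B' ~ N(μ_B, σ_B²) and Z_A' ~ N(μ_{Z_A}, σ_{Z_A}²), then βB' + Z_A' ~ N(μ_A, σ_A²); that is, the reverse-direction model A' = βB' + Z_A' reproduces the distribution of the original cause A. -/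
open MeasureTheory ProbabilityTheory Real
open scoped ENNReal NNReal

lemma gaussianPDFReal_conv_eq (μ₁ μ₂ : ℝ) {v₁ v₂ : ℝ≥0} (hv₁ : v₁ ≠ 0) (hv₂ : v₂ ≠ 0) (z : ℝ) :
    (fun x : ℝ => gaussianPDFReal μ₁ v₁ x * gaussianPDFReal μ₂ v₂ (z - x))
      = fun x : ℝ => ((√(2*π*(v₁:ℝ)))⁻¹ * (√(2*π*(v₂:ℝ)))⁻¹
          * rexp (-((z - μ₁ - μ₂)^2/(2*((v₁:ℝ)+(v₂:ℝ))))))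
        * rexp (-(((v₁:ℝ)+(v₂:ℝ))/(2*(v₁:ℝ)*(v₂:ℝ)))
            * (x - (μ₁ + (v₁:ℝ)*(z-μ₁-μ₂)/((v₁:ℝ)+(v₂:ℝ))))^2) := by
  have hs : 0 < (v₁:ℝ) := lt_of_le_of_ne v₁.coe_nonneg (by exact_mod_cast Ne.symm hv₁)
  have ht : 0 < (v₂:ℝ) := lt_of_le_of_ne v₂.coe_nonneg (by exact_mod_cast Ne.symm hv₂)
  funext x
  simp only [gaussianPDFReal]
  have harg : (-(x - μ₁)^2/(2*(v₁:ℝ))) + (-(z - x - μ₂)^2/(2*(v₂:ℝ)))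
      = -((z - μ₁ - μ₂)^2/(2*((v₁:ℝ)+(v₂:ℝ))))
        + (-(((v₁:ℝ)+(v₂:ℝ))/(2*(v₁:ℝ)*(v₂:ℝ)))
            * (x - (μ₁ + (v₁:ℝ)*(z-μ₁-μ₂)/((v₁:ℝ)+(v₂:ℝ))))^2) := by
    field_simp
    ring
  rw [mul_mul_mul_comm, ← Real.exp_add, harg, Real.exp_add]
  ring

lemma integral_gaussianPDFReal_conv (μ₁ μ₂ : ℝ) {v₁ v₂ : ℝ≥0} (hv₁ : v₁ ≠ 0) (hv₂ : v₂ ≠ 0)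
    (z : ℝ) :
    ∫ x : ℝ, gaussianPDFReal μ₁ v₁ x * gaussianPDFReal μ₂ v₂ (z - x)
      = gaussianPDFReal (μ₁ + μ₂) (v₁ + v₂) z := by
  have hs : 0 < (v₁:ℝ) := lt_of_le_of_ne v₁.coe_nonneg (by exact_mod_cast Ne.symm hv₁)
  have ht : 0 < (v₂:ℝ) := lt_of_le_of_ne v₂.coe_nonneg (by exact_mod_cast Ne.symm hv₂)
  have hst : 0 < (v₁:ℝ) + (v₂:ℝ) := by linarith
  have ha : 0 < ((v₁:ℝ)+(v₂:ℝ))/(2*(v₁:ℝ)*(v₂:ℝ)) := by positivity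
  rw [gaussianPDFReal_conv_eq μ₁ μ₂ hv₁ hv₂ z]
  rw [MeasureTheory.integral_const_mul, integral_sub_right_eq_self
    (fun y => rexp (-(((v₁:ℝ)+(v₂:ℝ))/(2*(v₁:ℝ)*(v₂:ℝ))) * y ^ 2)) _, integral_gaussian]
  have hπa : π / (((v₁:ℝ)+(v₂:ℝ))/(2*(v₁:ℝ)*(v₂:ℝ)))
      = (2*π*(v₁:ℝ)) * (2*π*(v₂:ℝ)) / (2*π*((v₁:ℝ)+(v₂:ℝ))) := by
    field_simp
  rw [hπa, Real.sqrt_div (by positivity), Real.sqrt_mul (by positivity)]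
  simp only [gaussianPDFReal, NNReal.coe_add]
  have h1 : (0:ℝ) < √(2*π*(v₁:ℝ)) := by positivity
  have h2 : (0:ℝ) < √(2*π*(v₂:ℝ)) := by positivity
  have h3 : (0:ℝ) < √(2*π*((v₁:ℝ)+(v₂:ℝ))) := by positivity
  rw [show z - (μ₁ + μ₂) = z - μ₁ - μ₂ by ring]
  field_simp
  rw [← Real.sqrt_mul (by positivity), ← Real.sqrt_mul (by positivity)]
  congr 1
  ring

lemma lintegral_gaussianPDF_conv (μ₁ μ₂ : ℝ) {v₁ v₂ : ℝ≥0} (hv₁ : v₁ ≠ 0) (hv₂ : v₂ ≠ 0) (z : ℝ) :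
    ∫⁻ x : ℝ, gaussianPDF μ₁ v₁ x * gaussianPDF μ₂ v₂ (z - x)
      = gaussianPDF (μ₁ + μ₂) (v₁ + v₂) z := by
  have hs : 0 < (v₁:ℝ) := lt_of_le_of_ne v₁.coe_nonneg (by exact_mod_cast Ne.symm hv₁)
  have ht : 0 < (v₂:ℝ) := lt_of_le_of_ne v₂.coe_nonneg (by exact_mod_cast Ne.symm hv₂)
  have ha : 0 < ((v₁:ℝ)+(v₂:ℝ))/(2*(v₁:ℝ)*(v₂:ℝ)) := by positivity
  have hint : Integrable (fun x => gaussianPDFReal μ₁ v₁ x * gaussianPDFReal μ₂ v₂ (z-x)) := by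
    rw [gaussianPDFReal_conv_eq μ₁ μ₂ hv₁ hv₂ z]
    exact ((integrable_exp_neg_mul_sq ha).comp_sub_right _).const_mul _
  simp_rw [gaussianPDF, ← ENNReal.ofReal_mul (gaussianPDFReal_nonneg _ _ _)]
  rw [← ofReal_integral_eq_lintegral_ofReal hint (ae_of_all _ fun x =>
        mul_nonneg (gaussianPDFReal_nonneg _ _ _) (gaussianPDFReal_nonneg _ _ _)),
      integral_gaussianPDFReal_conv μ₁ μ₂ hv₁ hv₂ z]

lemma gaussianReal_conv (μ₁ μ₂ : ℝ) {v₁ v₂ : ℝ≥0} (hv₁ : v₁ ≠ 0) (hv₂ : v₂ ≠ 0) :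
    Measure.map (fun p : ℝ × ℝ => p.1 + p.2) ((gaussianReal μ₁ v₁).prod (gaussianReal μ₂ v₂))
      = gaussianReal (μ₁ + μ₂) (v₁ + v₂) := by
  have hF : Measurable (fun p : ℝ × ℝ => gaussianPDF μ₁ v₁ p.1 * gaussianPDF μ₂ v₂ (p.2 - p.1)) :=
    ((measurable_gaussianPDF μ₁ v₁).comp measurable_fst).mul
      ((measurable_gaussianPDF μ₂ v₂).comp (measurable_snd.sub measurable_fst))
  ext s hs
  rw [Measure.map_apply (f := fun p : ℝ × ℝ => p.1 + p.2) (measurable_fst.add measurable_snd) hs,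
      Measure.prod_apply (s := (fun p : ℝ × ℝ => p.1 + p.2) ⁻¹' s) ((measurable_fst.add measurable_snd) hs)]
  have h1 : ∀ x : ℝ, gaussianReal μ₂ v₂ (Prod.mk x ⁻¹' ((fun p : ℝ × ℝ => p.1 + p.2) ⁻¹' s))
      = ∫⁻ z in s, gaussianPDF μ₂ v₂ (z - x) := by
    intro x
    have : (Prod.mk x ⁻¹' ((fun p : ℝ × ℝ => p.1 + p.2) ⁻¹' s)) = (x + ·) ⁻¹' s := rfl
    rw [this, ← Measure.map_apply (measurable_const_add x) hs, gaussianReal_map_const_add x,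
        gaussianReal_apply _ hv₂]
    exact lintegral_congr fun z => by rw [gaussianPDF, gaussianPDF, gaussianPDFReal_sub]
  simp_rw [h1]
  have hg : Measurable fun x : ℝ => ∫⁻ z in s, gaussianPDF μ₂ v₂ (z - x) :=
    Measurable.lintegral_prod_right'
      ((measurable_gaussianPDF μ₂ v₂).comp (measurable_snd.sub measurable_fst))
  rw [gaussianReal_of_var_ne_zero _ hv₁,
      lintegral_withDensity_eq_lintegral_mul volume (measurable_gaussianPDF μ₁ v₁) hg]
  have h2 : ∀ x : ℝ, (gaussianPDF μ₁ v₁ * fun x => ∫⁻ z in s, gaussianPDF μ₂ v₂ (z - x)) x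
      = ∫⁻ z in s, gaussianPDF μ₁ v₁ x * gaussianPDF μ₂ v₂ (z - x) := fun x =>
    (lintegral_const_mul _ ((measurable_gaussianPDF μ₂ v₂).comp (measurable_id.sub
      measurable_const))).symm
  simp_rw [h2]
  rw [lintegral_lintegral_swap (hF.aemeasurable)]
  rw [gaussianReal_apply _ (by simp [hv₁]) s]
  exact lintegral_congr fun z => lintegral_gaussianPDF_conv μ₁ μ₂ hv₁ hv₂ z

/-- **Reverse-direction model reproduces the cause distribution.** With
`μB = αμA + μZ`, `σB2 = α²σA2 + σZ2`, `β = ασA2/σB2`,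
`μZA = (1 − αβ)μA − βμZ`, `σZA2 = (1 − αβ)²σA2 + β²σZ2`, if `B'` and `Z_A'`
are independent with `B' ~ N(μB, σB2)` and `Z_A' ~ N(μZA, σZA2)`, then
`βB' + Z_A' ~ N(μA, σA2)`. -/
theorem reverse_model_reproduces_cause
    {Ω : Type*} [MeasurableSpace Ω] (P : Measure Ω) [IsProbabilityMeasure P]
    (α μA μZ σA2 σZ2 : ℝ) (hσA : 0 < σA2) (hσZ : 0 < σZ2)
    (μB σB2 β μZA σZA2 : ℝ)
    (hμB : μB = α * μA + μZ) (hσB : σB2 = α ^ 2 * σA2 + σZ2)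
    (hβ : β = α * σA2 / σB2)
    (hμZA : μZA = (1 - α * β) * μA - β * μZ)
    (hσZA : σZA2 = (1 - α * β) ^ 2 * σA2 + β ^ 2 * σZ2)
    (B ZA : Ω → ℝ) (hB_meas : Measurable B) (hZA_meas : Measurable ZA)
    (h_indep : IndepFun B ZA P)
    (hB_law : Measure.map B P = gaussianReal μB σB2.toNNReal)
    (hZA_law : Measure.map ZA P = gaussianReal μZA σZA2.toNNReal) :
    Measure.map (fun ω => β * B ω + ZA ω) P = gaussianReal μA σA2.toNNReal := by
  have hσBpos : 0 < σB2 := by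
    rw [hσB]; exact add_pos_of_nonneg_of_pos (by positivity) hσZ
  have h1mαβ : 1 - α * β = σZ2 / σB2 := by
    rw [hβ]; field_simp; linarith [hσB]
  have hσZApos : 0 < σZA2 := by
    rw [hσZA]
    exact add_pos_of_pos_of_nonneg
      (mul_pos (pow_pos (by rw [h1mαβ]; exact div_pos hσZ hσBpos) 2) hσA) (by positivity)
  by_cases hβ0 : β = 0
  · have hα0 : α = 0 := by
      rcases mul_eq_zero.mp ((div_eq_zero_iff.mp (by rw [← hβ]; exact hβ0)).resolve_right hσBpos.ne')
        with h | h
      · exact h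
      · exact absurd h hσA.ne'
    have hμ : μZA = μA := by rw [hμZA, hβ0]; ring
    have hσ : σZA2 = σA2 := by rw [hσZA, hβ0]; ring
    simp only [hβ0, zero_mul, zero_add]
    rw [hZA_law, hμ, hσ]
  · -- law of β • B
    have hβB_law : Measure.map (fun ω => β * B ω) P
        = gaussianReal (β * μB) (⟨β ^ 2, sq_nonneg _⟩ * σB2.toNNReal) := by
      have : (fun ω => β * B ω) = (fun x => β * x) ∘ B := rfl
      rw [this, ← Measure.map_map (measurable_const_mul β) hB_meas, hB_law,
        gaussianReal_map_const_mul]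
      rfl
    have h_indep' : IndepFun (fun ω => β * B ω) ZA P :=
      h_indep.comp (measurable_const_mul β) measurable_id
    have hpair : Measure.map (fun ω => (β * B ω, ZA ω)) P
        = (Measure.map (fun ω => β * B ω) P).prod (Measure.map ZA P) :=
      (indepFun_iff_map_prod_eq_prod_map_map ((hB_meas.const_mul β).aemeasurable)
        hZA_meas.aemeasurable).mp h_indep'
    have hcomp : Measure.map (fun ω => β * B ω + ZA ω) P
        = Measure.map (fun p : ℝ × ℝ => p.1 + p.2) (Measure.map (fun ω => (β * B ω, ZA ω)) P) := by
      rw [Measure.map_map (g := fun p : ℝ × ℝ => p.1 + p.2) (measurable_fst.add measurable_snd)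
        ((hB_meas.const_mul β).prodMk hZA_meas)]
      rfl
    have hv₁ : (⟨β ^ 2, sq_nonneg β⟩ * σB2.toNNReal : ℝ≥0) ≠ 0 := by
      refine mul_ne_zero ?_ ?_
      · exact fun h => hβ0 ((pow_eq_zero_iff two_ne_zero).mp (congrArg Subtype.val h))
      · simp [Real.toNNReal_eq_zero, not_le, hσBpos]
    have hv₂ : σZA2.toNNReal ≠ 0 := by simp [Real.toNNReal_eq_zero, not_le, hσZApos]
    rw [hcomp, hpair, hβB_law, hZA_law, gaussianReal_conv _ _ hv₁ hv₂]
    congr 1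
    · rw [hμB, hμZA]; ring
    · have hvar : β ^ 2 * σB2 + σZA2 = σA2 := by
        rw [hσZA, hβ, hσB]
        field_simp
        ring
      apply NNReal.coe_injective
      push_cast
      show (β ^ 2 : ℝ) * (σB2.toNNReal : ℝ) + (σZA2.toNNReal : ℝ) = (σA2.toNNReal : ℝ)
      rw [Real.coe_toNNReal _ hσBpos.le, Real.coe_toNNReal _ hσZApos.le,
        Real.coe_toNNReal _ hσA.le]
      exact hvar
end

section
/- Let α ∈ ℝ, let μ_A, μ_Z ∈ ℝ and σ_A², σ_Z² > 0. Define μ_B := αμ_A + μ_Z, σ_B² := α²σ_A² + σ_Z², β := ασ_A²/σ_B², μ_{Z_A} := (1 − αβ)μ_A − βμ_Z, and σ_{Z_A}² := (1 − αβ)²σ_A² + β²σ_Z². Then the two linear-Gaussian structural equation models with opposite causal directions induce exactly the same joint distribution of (A, B): the pushforward of the product measure N(μ_A, σ_A²) ⊗ N(μ_Z, σ_Z²) under the map (a, z) ↦ (a, αa + z) equals the pushforward of the product measure N(μ_B, σ_B²) ⊗ N(μ_{Z_A}, σ_{Z_A}²) under the map (b, z) ↦ (βb + z, b). -/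
open MeasureTheory ProbabilityTheory
open scoped ENNReal NNReal Real

set_option maxHeartbeats 1000000

/-- The shear map `(x, y) ↦ (x, c * x + y)` as a measurable equivalence of `ℝ × ℝ`. -/
noncomputable def shearEquiv (c : ℝ) : (ℝ × ℝ) ≃ᵐ (ℝ × ℝ) where
  toFun p := (p.1, c * p.1 + p.2)
  invFun p := (p.1, p.2 - c * p.1)
  left_inv p := by simp
  right_inv p := by simp
  measurable_toFun := by
    exact measurable_fst.prodMk ((measurable_fst.const_mul c).add measurable_snd)
  measurable_invFun := by
    exact measurable_fst.prodMk (measurable_snd.sub (measurable_fst.const_mul c))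

lemma shearEquiv_measurePreserving (c : ℝ) :
    MeasurePreserving (shearEquiv c)
      ((volume : Measure ℝ).prod volume) ((volume : Measure ℝ).prod volume) := by
  have h := MeasurePreserving.skew_product (μa := (volume : Measure ℝ))
    (μb := (volume : Measure ℝ)) (μc := (volume : Measure ℝ)) (μd := (volume : Measure ℝ))
    (f := id) (MeasurePreserving.id _)
    (g := fun x y => c * x + y)
    (by exact ((measurable_fst.const_mul c).add measurable_snd))
    (Filter.Eventually.of_forall fun x => (measurePreserving_add_left volume (c * x)).map_eq)
  exact h

/-- Pushforward of a `withDensity` measure under a measurable equivalence. -/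
lemma map_withDensity_equiv {X Y : Type*} [MeasurableSpace X] [MeasurableSpace Y]
    (T : X ≃ᵐ Y) (μ : Measure X) {h : X → ℝ≥0∞} (hm : Measurable h) :
    Measure.map T (μ.withDensity h)
      = (Measure.map T μ).withDensity (fun y => h (T.symm y)) := by
  ext s hs
  rw [Measure.map_apply T.measurable hs, withDensity_apply _ (T.measurable hs),
    withDensity_apply _ hs, Measure.restrict_map T.measurable hs,
    lintegral_map (f := fun y => h (T.symm y)) (hm.comp T.symm.measurable) T.measurable]
  simp only [MeasurableEquiv.symm_apply_apply]

/-- The product of two Gaussian measures as a measure with density on `ℝ × ℝ`. -/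
lemma gaussianReal_prod_eq_withDensity (m₁ m₂ : ℝ) {v₁ v₂ : ℝ≥0} (h₁ : v₁ ≠ 0) (h₂ : v₂ ≠ 0) :
    (gaussianReal m₁ v₁).prod (gaussianReal m₂ v₂)
      = ((volume : Measure ℝ).prod volume).withDensity
          (fun p => gaussianPDF m₁ v₁ p.1 * gaussianPDF m₂ v₂ p.2) := by
  refine Measure.prod_eq fun s t hs ht => ?_
  rw [withDensity_apply _ (hs.prod ht), ← Measure.prod_restrict,
    lintegral_prod_mul (measurable_gaussianPDF m₁ v₁).aemeasurable
      (measurable_gaussianPDF m₂ v₂).aemeasurable,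
    ← gaussianReal_apply _ h₁, ← gaussianReal_apply _ h₂]

lemma gaussianPDFReal_key (α μA μZ σA2 σZ2 : ℝ) (hσA : 0 < σA2) (hσZ : 0 < σZ2)
    (μB σB2 β μZA σZA2 : ℝ)
    (hμB : μB = α * μA + μZ) (hσB : σB2 = α ^ 2 * σA2 + σZ2)
    (hβ : β = α * σA2 / σB2)
    (hμZA : μZA = (1 - α * β) * μA - β * μZ)
    (hσZA : σZA2 = (1 - α * β) ^ 2 * σA2 + β ^ 2 * σZ2) (x y : ℝ) :
    gaussianPDFReal μA σA2.toNNReal x * gaussianPDFReal μZ σZ2.toNNReal (y - α * x)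
      = gaussianPDFReal μB σB2.toNNReal y * gaussianPDFReal μZA σZA2.toNNReal (x - β * y) := by
  have hσB' : 0 < σB2 := by rw [hσB]; positivity
  have hprod : σB2 * σZA2 = σA2 * σZ2 := by
    rw [hσZA, hβ, hσB]
    have h0 : α ^ 2 * σA2 + σZ2 ≠ 0 := by positivity
    field_simp
    ring
  have hσZA' : 0 < σZA2 := by
    have : σZA2 = σA2 * σZ2 / σB2 := by
      field_simp at hprod ⊢
      linarith [hprod]
    rw [this]; positivity
  have hcA : ((σA2.toNNReal : ℝ)) = σA2 := Real.coe_toNNReal _ hσA.le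
  have hcZ : ((σZ2.toNNReal : ℝ)) = σZ2 := Real.coe_toNNReal _ hσZ.le
  have hcB : ((σB2.toNNReal : ℝ)) = σB2 := Real.coe_toNNReal _ hσB'.le
  have hcZA : ((σZA2.toNNReal : ℝ)) = σZA2 := Real.coe_toNNReal _ hσZA'.le
  simp only [gaussianPDFReal, hcA, hcZ, hcB, hcZA]
  have hπ : (0 : ℝ) < 2 * Real.pi := by positivity
  -- constants
  have hconst : (Real.sqrt (2 * Real.pi * σA2))⁻¹ * (Real.sqrt (2 * Real.pi * σZ2))⁻¹
      = (Real.sqrt (2 * Real.pi * σB2))⁻¹ * (Real.sqrt (2 * Real.pi * σZA2))⁻¹ := by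
    rw [← mul_inv, ← mul_inv, ← Real.sqrt_mul (by positivity), ← Real.sqrt_mul (by positivity)]
    congr 2
    linear_combination (-(4 * Real.pi ^ 2)) * hprod
  -- exponents
  have hexp : -(x - μA) ^ 2 / (2 * σA2) + -(y - α * x - μZ) ^ 2 / (2 * σZ2)
      = -(y - μB) ^ 2 / (2 * σB2) + -(x - β * y - μZA) ^ 2 / (2 * σZA2) := by
    have h0 : α ^ 2 * σA2 + σZ2 ≠ 0 := by positivity
    have hw' : σZA2 = σA2 * σZ2 / σB2 := by
      rw [eq_div_iff hσB'.ne']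
      linear_combination hprod
    have hμZA' : μZA = (σZ2 * μA - α * σA2 * μZ) / σB2 := by
      rw [hμZA, hβ, eq_div_iff hσB'.ne']
      field_simp
      linear_combination μA * hσB
    rw [hμB, hβ, hw', hμZA', hσB]
    field_simp
    ring
  calc (Real.sqrt (2 * Real.pi * σA2))⁻¹ * Real.exp (-(x - μA) ^ 2 / (2 * σA2))
        * ((Real.sqrt (2 * Real.pi * σZ2))⁻¹ * Real.exp (-(y - α * x - μZ) ^ 2 / (2 * σZ2)))
      = ((Real.sqrt (2 * Real.pi * σA2))⁻¹ * (Real.sqrt (2 * Real.pi * σZ2))⁻¹)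
        * Real.exp (-(x - μA) ^ 2 / (2 * σA2) + -(y - α * x - μZ) ^ 2 / (2 * σZ2)) := by
        rw [Real.exp_add]; ring
    _ = ((Real.sqrt (2 * Real.pi * σB2))⁻¹ * (Real.sqrt (2 * Real.pi * σZA2))⁻¹)
        * Real.exp (-(y - μB) ^ 2 / (2 * σB2) + -(x - β * y - μZA) ^ 2 / (2 * σZA2)) := by
        rw [hconst, hexp]
    _ = _ := by rw [Real.exp_add]; ring

/-- **Observational equivalence of the two causal directions.** The forward
linear-Gaussian model `(A, B) = (A, αA + Z_B)` and the reverse model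
`(A, B) = (βB + Z_A, B)` induce exactly the same joint distribution:
the pushforward of `N(μA, σA2) ⊗ N(μZ, σZ2)` under `(a, z) ↦ (a, αa + z)`
equals the pushforward of `N(μB, σB2) ⊗ N(μZA, σZA2)` under
`(b, z) ↦ (βb + z, b)`. -/
theorem linear_gaussian_direction_unidentifiable
    (α μA μZ σA2 σZ2 : ℝ) (hσA : 0 < σA2) (hσZ : 0 < σZ2)
    (μB σB2 β μZA σZA2 : ℝ)
    (hμB : μB = α * μA + μZ) (hσB : σB2 = α ^ 2 * σA2 + σZ2)
    (hβ : β = α * σA2 / σB2)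
    (hμZA : μZA = (1 - α * β) * μA - β * μZ)
    (hσZA : σZA2 = (1 - α * β) ^ 2 * σA2 + β ^ 2 * σZ2) :
    Measure.map (fun p : ℝ × ℝ => (p.1, α * p.1 + p.2))
        ((gaussianReal μA σA2.toNNReal).prod (gaussianReal μZ σZ2.toNNReal))
      = Measure.map (fun p : ℝ × ℝ => (β * p.1 + p.2, p.1))
        ((gaussianReal μB σB2.toNNReal).prod (gaussianReal μZA σZA2.toNNReal)) := by
  have hσB' : 0 < σB2 := by rw [hσB]; positivity
  have hprod : σB2 * σZA2 = σA2 * σZ2 := by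
    rw [hσZA, hβ, hσB]
    have h0 : α ^ 2 * σA2 + σZ2 ≠ 0 := by positivity
    field_simp
    ring
  have hσZA' : 0 < σZA2 := by
    have : σZA2 = σA2 * σZ2 / σB2 := by
      field_simp at hprod ⊢
      linarith [hprod]
    rw [this]; positivity
  have hA0 : σA2.toNNReal ≠ 0 := by simp [Real.toNNReal_eq_zero, not_le, hσA]
  have hZ0 : σZ2.toNNReal ≠ 0 := by simp [Real.toNNReal_eq_zero, not_le, hσZ]
  have hB0 : σB2.toNNReal ≠ 0 := by simp [Real.toNNReal_eq_zero, not_le, hσB']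
  have hZA0 : σZA2.toNNReal ≠ 0 := by simp [Real.toNNReal_eq_zero, not_le, hσZA']
  -- rewrite the maps as measurable equivalences
  have e1 : (fun p : ℝ × ℝ => (p.1, α * p.1 + p.2)) = ⇑(shearEquiv α) := rfl
  have e2 : (fun p : ℝ × ℝ => (β * p.1 + p.2, p.1))
      = ⇑((shearEquiv β).trans ((MeasurableEquiv.prodComm : ℝ × ℝ ≃ᵐ ℝ × ℝ))) := rfl
  rw [e1, e2,
    gaussianReal_prod_eq_withDensity μA μZ hA0 hZ0,
    gaussianReal_prod_eq_withDensity μB μZA hB0 hZA0,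
    map_withDensity_equiv (shearEquiv α) _
      (h := fun p => gaussianPDF μA σA2.toNNReal p.1 * gaussianPDF μZ σZ2.toNNReal p.2)
      (((measurable_gaussianPDF _ _).comp measurable_fst).mul
        ((measurable_gaussianPDF _ _).comp measurable_snd)),
    map_withDensity_equiv ((shearEquiv β).trans (MeasurableEquiv.prodComm : ℝ × ℝ ≃ᵐ ℝ × ℝ)) _
      (h := fun p => gaussianPDF μB σB2.toNNReal p.1 * gaussianPDF μZA σZA2.toNNReal p.2)
      (((measurable_gaussianPDF _ _).comp measurable_fst).mul
        ((measurable_gaussianPDF _ _).comp measurable_snd)),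
    (shearEquiv_measurePreserving α).map_eq]
  have hswap : Measure.map (⇑((shearEquiv β).trans ((MeasurableEquiv.prodComm : ℝ × ℝ ≃ᵐ ℝ × ℝ))))
      ((volume : Measure ℝ).prod volume) = (volume : Measure ℝ).prod volume := by
    have : MeasurePreserving (⇑((shearEquiv β).trans ((MeasurableEquiv.prodComm : ℝ × ℝ ≃ᵐ ℝ × ℝ))))
        ((volume : Measure ℝ).prod volume) ((volume : Measure ℝ).prod volume) :=
      Measure.measurePreserving_swap.comp (shearEquiv_measurePreserving β)
    exact this.map_eq
  rw [hswap]
  congr 1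
  funext p
  have hsymm1 : (shearEquiv α).symm p = (p.1, p.2 - α * p.1) := rfl
  have hsymm2 : ((shearEquiv β).trans ((MeasurableEquiv.prodComm : ℝ × ℝ ≃ᵐ ℝ × ℝ))).symm p
      = (p.2, p.1 - β * p.2) := rfl
  rw [hsymm1, hsymm2]
  simp only [gaussianPDF]
  rw [← ENNReal.ofReal_mul (gaussianPDFReal_nonneg _ _ _),
    ← ENNReal.ofReal_mul (gaussianPDFReal_nonneg _ _ _)]
  congr 1
  exact gaussianPDFReal_key α μA μZ σA2 σZ2 hσA hσZ μB σB2 β μZA σZA2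
    hμB hσB hβ hμZA hσZA p.1 p.2
end

section
/- Let (α, 𝒜, μ) be a probability space and let u_1, …, u_N : α → [0,∞) be measurable umbrella bias functions with weights w_i := ∫ u_i dμ ∈ (0,∞), biased probability measures μ_i := w_i⁻¹ · (u_i · μ), and assume Σ_{k=1}^N u_k(q)/w_k > 0 for μ-almost every q. Then for every j ∈ {1,…,N}, Σ_{i=1}^N ∫ u_j(q) / (Σ_{k=1}^N u_k(q)/w_k) dμ_i(q) = ∫ u_j dμ; that is, summing the umbrella-reweighted averages of u_j over the N biased distributions recovers the target-measure average ⟨u_j⟩_μ = w_j. -/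
open MeasureTheory

/-- **Key identity (Eq. 18).** For every `j`, summing the umbrella-reweighted
averages of `u j` over the `N` biased distributions recovers the
target-measure average: `∑ i, ∫ u j q / (∑ k, u k q / w k) ∂(μb i) = ∫ u j ∂μ`. -/
theorem umbrella_uj_reconstruction
    {α : Type*} [MeasurableSpace α] (μ : Measure α) [IsProbabilityMeasure μ]
    (N : ℕ) (u : Fin N → α → ℝ)
    (hu_meas : ∀ i, Measurable (u i))
    (hu_nonneg : ∀ i q, 0 ≤ u i q)
    (hu_int : ∀ i, Integrable (u i) μ)
    (w : Fin N → ℝ) (hw : ∀ i, w i = ∫ q, u i q ∂μ)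
    (hw_pos : ∀ i, 0 < w i)
    (μb : Fin N → Measure α)
    (hμb : ∀ i, μb i = μ.withDensity (fun q => ENNReal.ofReal (u i q / w i)))
    (hcover : ∀ᵐ q ∂μ, 0 < ∑ k, u k q / w k) :
    ∀ j, ∑ i, ∫ q, u j q / (∑ k, u k q / w k) ∂(μb i) = ∫ q, u j q ∂μ := by
  intro j
  set S : α → ℝ := fun q => ∑ k, u k q / w k with hS
  set f : α → ℝ := fun q => u j q / S q with hf
  have hS_meas : Measurable S := by
    apply Finset.measurable_sum
    intro k _
    exact (hu_meas k).div_const _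
  have hS_nonneg : ∀ q, 0 ≤ S q := fun q =>
    Finset.sum_nonneg fun k _ => div_nonneg (hu_nonneg k q) (hw_pos k).le
  have hf_meas : Measurable f := (hu_meas j).div hS_meas
  have hf_nonneg : ∀ q, 0 ≤ f q := fun q => div_nonneg (hu_nonneg j q) (hS_nonneg q)
  have hle : ∀ q, u j q / w j ≤ S q := fun q =>
    Finset.single_le_sum (fun k _ => div_nonneg (hu_nonneg k q) (hw_pos k).le)
      (Finset.mem_univ j)
  have hf_bdd : ∀ q, f q ≤ w j := by
    intro q
    rcases eq_or_lt_of_le (hu_nonneg j q) with h | h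
    · simp [hf, ← h, (hw_pos j).le]
    · have hSpos : 0 < S q := lt_of_lt_of_le (div_pos h (hw_pos j)) (hle q)
      rw [hf, div_le_iff₀ hSpos]
      calc u j q = w j * (u j q / w j) := by
            rw [mul_div_assoc', mul_comm, mul_div_assoc, div_self (hw_pos j).ne', mul_one]
        _ ≤ w j * S q := mul_le_mul_of_nonneg_left (hle q) (hw_pos j).le
  -- rewrite each integral over μb i as an integral over μ
  have hstep : ∀ i : Fin N, ∫ q, f q ∂(μb i) = ∫ q, (u i q / w i) * f q ∂μ := by
    intro i
    rw [hμb i]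
    have hm : Measurable fun q => (u i q / w i).toNNReal :=
      ((hu_meas i).div_const _).real_toNNReal
    have : (fun q => ENNReal.ofReal (u i q / w i))
        = fun q => ((u i q / w i).toNNReal : ENNReal) := rfl
    rw [this, integral_withDensity_eq_integral_smul hm]
    congr 1
    funext q
    simp [NNReal.smul_def, Real.coe_toNNReal _ (div_nonneg (hu_nonneg i q) (hw_pos i).le)]
  have hint : ∀ i : Fin N, Integrable (fun q => (u i q / w i) * f q) μ := by
    intro i
    have h1 : Integrable (fun q => u i q / w i) μ := (hu_int i).div_const _
    exact Integrable.bdd_mul (c := w j) h1 hf_meas.aestronglyMeasurable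
      (Filter.Eventually.of_forall fun q => by
        rw [Real.norm_of_nonneg (hf_nonneg q)]; exact hf_bdd q) |>.congr
      (Filter.Eventually.of_forall fun q => by ring)
  calc ∑ i, ∫ q, f q ∂(μb i) = ∑ i, ∫ q, (u i q / w i) * f q ∂μ := by
        exact Finset.sum_congr rfl fun i _ => hstep i
    _ = ∫ q, ∑ i, (u i q / w i) * f q ∂μ := by
        rw [integral_finset_sum _ fun i _ => hint i]
    _ = ∫ q, u j q ∂μ := by
        apply integral_congr_ae
        filter_upwards [hcover] with q hq
        rw [← Finset.sum_mul, hf]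
        change (∑ x, u x q / w x) * (u j q / (∑ k, u k q / w k)) = u j q
        field_simp
end
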